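/- Let 0.5 < ε < 1 and c > 0 satisfy Q(c) ≤ 1 − ε^{1/2^n}. Then 2c² ≥ (1/2)[c + Q⁻¹((ε^{−1/2^n} − 1)·(1 − Q(c)))]². -/
import Mathlib

/-- The standard Gaussian tail function `Q(x) = (1/√(2π)) ∫ₓ^∞ e^{-t²/2} dt`. -/
noncomputable def gaussQ (x : ℝ) : ℝ :=
  ∫ t in Set.Ioi x, (1 / Real.sqrt (2 * Real.pi)) * Real.exp (-(t ^ 2) / 2)

/-- The inverse of the Gaussian tail function on `(0,1)`. -/
noncomputable def gaussQinv : ℝ → ℝ := Function.invFun gaussQ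

open MeasureTheory Real Set

lemma gpdf_eq : (fun t : ℝ => (1 / Real.sqrt (2 * Real.pi)) * Real.exp (-(t ^ 2) / 2))
    = fun t : ℝ => (1 / Real.sqrt (2 * Real.pi)) * Real.exp (-(1/2 : ℝ) * t ^ 2) := by
  funext t; ring_nf

lemma gpdf_integrable :
    Integrable (fun t : ℝ => (1 / Real.sqrt (2 * Real.pi)) * Real.exp (-(t ^ 2) / 2)) := by
  rw [gpdf_eq]
  exact (integrable_exp_neg_mul_sq (by norm_num : (0:ℝ) < 1/2)).const_mul _

lemma gpdf_pos (t : ℝ) : 0 < (1 / Real.sqrt (2 * Real.pi)) * Real.exp (-(t ^ 2) / 2) := by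
  apply mul_pos
  · positivity
  · exact Real.exp_pos _

lemma gaussQ_strictAnti : StrictAnti gaussQ := by
  intro x y hxy
  set f : ℝ → ℝ := fun t => (1 / Real.sqrt (2 * Real.pi)) * Real.exp (-(t ^ 2) / 2) with hf
  have hsplit : gaussQ x = (∫ t in Set.Ioc x y, f t) + gaussQ y := by
    rw [gaussQ, gaussQ, ← setIntegral_union (Set.Ioc_disjoint_Ioi le_rfl) measurableSet_Ioi
      gpdf_integrable.integrableOn gpdf_integrable.integrableOn,
      Set.Ioc_union_Ioi_eq_Ioi hxy.le]
  have hpos : 0 < ∫ t in Set.Ioc x y, f t := by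
    rw [setIntegral_pos_iff_support_of_nonneg_ae
      (Filter.Eventually.of_forall fun t => (gpdf_pos t).le) gpdf_integrable.integrableOn]
    have : Function.support f = Set.univ := by
      ext t
      simp only [Function.mem_support, Set.mem_univ, iff_true]
      exact (gpdf_pos t).ne'
    rw [this, Set.univ_inter, Real.volume_Ioc]
    simp [hxy]
  linarith [hsplit]

lemma gaussQ_continuous : Continuous gaussQ := by
  set f : ℝ → ℝ := fun t => (1 / Real.sqrt (2 * Real.pi)) * Real.exp (-(t ^ 2) / 2) with hf
  have key : ∀ b : ℝ, gaussQ b = gaussQ 0 - ∫ t in (0:ℝ)..b, f t := by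
    intro b
    have h1 : (∫ t in Set.Iic b, f t) + gaussQ b = ∫ t, f t :=
      intervalIntegral.integral_Iic_add_Ioi gpdf_integrable.integrableOn gpdf_integrable.integrableOn
    have h2 : (∫ t in Set.Iic (0:ℝ), f t) + gaussQ 0 = ∫ t, f t :=
      intervalIntegral.integral_Iic_add_Ioi gpdf_integrable.integrableOn gpdf_integrable.integrableOn
    have h3 : (∫ t in Set.Iic b, f t) - (∫ t in Set.Iic (0:ℝ), f t) = ∫ t in (0:ℝ)..b, f t :=
      intervalIntegral.integral_Iic_sub_Iic gpdf_integrable.integrableOn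
        gpdf_integrable.integrableOn
    linarith
  have : Continuous fun b => gaussQ 0 - ∫ t in (0:ℝ)..b, f t :=
    Continuous.sub continuous_const (gpdf_integrable.continuous_primitive 0)
  have heq : gaussQ = fun b => gaussQ 0 - ∫ t in (0:ℝ)..b, f t := funext key
  rw [heq]; exact this

lemma gaussQ_total : gaussQ c + gaussQ (-c) = 1 := by
  set f : ℝ → ℝ := fun t => (1 / Real.sqrt (2 * Real.pi)) * Real.exp (-(t ^ 2) / 2) with hf
  have hsym : gaussQ c = ∫ t in Set.Iic (-c), f t := by
    rw [← integral_comp_neg_Ioi]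
    simp only [gaussQ, hf, neg_sq]
  have htot : ∫ t, f t = 1 := by
    have h1 : ∫ t : ℝ, Real.exp (-(1/2:ℝ) * t ^ 2) = Real.sqrt (2 * Real.pi) := by
      rw [integral_gaussian]
      congr 1
      norm_num
      ring
    calc ∫ t, f t
        = (1 / Real.sqrt (2 * Real.pi)) * ∫ t : ℝ, Real.exp (-(1/2:ℝ) * t ^ 2) := by
          rw [← MeasureTheory.integral_const_mul]
          congr 1
          funext t
          rw [hf]
          ring_nf
      _ = 1 := by
          rw [h1, one_div, inv_mul_cancel₀ (Real.sqrt_pos.mpr (by positivity)).ne']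
  have h1 : (∫ t in Set.Iic (-c), f t) + gaussQ (-c) = ∫ t, f t :=
    intervalIntegral.integral_Iic_add_Ioi gpdf_integrable.integrableOn gpdf_integrable.integrableOn
  rw [hsym]; linarith

/-- Inequality (39): if `0.5 < ε < 1` and `c > 0` satisfy `Q(c) ≤ 1 − ε^{1/2^n}`, then
`2c² ≥ (1/2)[c + Q⁻¹((ε^{−1/2^n} − 1)·(1 − Q(c)))]²`. -/
theorem high_mean_constraint_reduces (n : ℕ) (ε c : ℝ)
    (hε0 : 0.5 < ε) (hε1 : ε < 1) (hc : 0 < c)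
    (hQc : gaussQ c ≤ 1 - ε ^ ((1 : ℝ) / 2 ^ n)) :
    2 * c ^ 2 ≥
      (1 / 2) * (c + gaussQinv ((ε ^ (-((1 : ℝ) / 2 ^ n)) - 1) * (1 - gaussQ c))) ^ 2 := by
  set a : ℝ := (1 : ℝ) / 2 ^ n with ha
  have hεpos : (0:ℝ) < ε := by norm_num at hε0 ⊢; linarith
  have ha0 : 0 < a := by positivity
  have ha1 : a ≤ 1 := by
    rw [ha, div_le_one (by positivity)]
    exact one_le_pow₀ (by norm_num)
  have hεa : ε ^ a ≤ 1 := Real.rpow_le_one hεpos.le hε1.le ha0.le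
  have hεa_pos : 0 < ε ^ a := Real.rpow_pos_of_pos hεpos a
  have hεa_half : (1/2 : ℝ) < ε ^ a := by
    have : ε ^ (1:ℝ) ≤ ε ^ a := Real.rpow_le_rpow_of_exponent_ge hεpos hε1.le ha1
    rw [Real.rpow_one] at this
    norm_num at hε0
    linarith
  have hneg : ε ^ (-a) = (ε ^ a)⁻¹ := Real.rpow_neg hεpos.le a
  set x : ℝ := (ε ^ (-a) - 1) * (1 - gaussQ c) with hx
  -- Q(c) ≤ x
  have hQc1 : gaussQ c < 1 := by linarith
  have hQlow : gaussQ c ≤ x := by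
    have h1 : 1 ≤ ε ^ (-a) * (1 - gaussQ c) := by
      rw [hneg, inv_mul_eq_div, le_div_iff₀ hεa_pos, one_mul]
      linarith
    have : x = ε ^ (-a) * (1 - gaussQ c) - (1 - gaussQ c) := by rw [hx]; ring
    linarith
  -- x ≤ Q(-c)
  have hQhigh : x ≤ gaussQ (-c) := by
    have htot : gaussQ c + gaussQ (-c) = 1 := gaussQ_total
    have h2 : ε ^ (-a) < 2 := by
      rw [hneg]
      rw [inv_lt_comm₀ hεa_pos (by norm_num)]
      linarith
    have h3 : ε ^ (-a) - 1 < 1 := by linarith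
    have h4 : 0 ≤ 1 - gaussQ c := by linarith
    nlinarith [h3, h4]
  -- IVT: find z ∈ [-c, c] with gaussQ z = x
  have hmem : x ∈ Set.Icc (gaussQ c) (gaussQ (-c)) := ⟨hQlow, hQhigh⟩
  have hivt := intermediate_value_Icc' (by linarith : -c ≤ c)
    gaussQ_continuous.continuousOn hmem
  obtain ⟨z, hz, hQz⟩ := hivt
  have hinv : gaussQinv x = z := by
    rw [← hQz, gaussQinv]
    exact Function.leftInverse_invFun gaussQ_strictAnti.injective z
  rw [hinv]
  obtain ⟨hz1, hz2⟩ := hz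
  nlinarith [sq_nonneg (c - z), sq_nonneg (c + z)]
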